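/- A point z = (x,p) ∈ ℝ³×ℝ³ is a fold point, i.e. H₁(z) = 0, H₀₁(z) = 0 and H₀₀₁(z) ≠ 0, if and only if p₁ = p₃ = 0 and p₂ ≠ 0; at such a point H₀₀₁(z) = c₃c₅c₇p₂. Moreover every fold point is parabolic: since H₁₀₁ ≡ 0, the two second derivatives Φ̈₊ = (H₀₀₁ + H₁₀₁)(z) and Φ̈₋ = (H₀₀₁ − H₁₀₁)(z) coincide, so Φ̈₊·Φ̈₋ = H₀₀₁(z)² > 0. -/

import Mathlib

noncomputable section

/-- Lie bracket of vector fields on ℝ³: `[F,G](x) = G'(x)F(x) − F'(x)G(x)`. -/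
def lieBracket (F G : (Fin 3 → ℝ) → (Fin 3 → ℝ)) (x : Fin 3 → ℝ) : Fin 3 → ℝ :=
  fderiv ℝ G x (F x) - fderiv ℝ F x (G x)

/-- Drift vector field of the electric vehicle. -/
def F0 (c1 c2 c3 c4 c5 c6 : ℝ) (x : Fin 3 → ℝ) : Fin 3 → ℝ :=
  ![c1 * x 0 + c2 * x 2, c3 * x 2, c4 + c5 * x 0 + c6 * (x 2) ^ 2]

/-- Control vector field of the electric vehicle. -/
def F1 (c7 : ℝ) (_x : Fin 3 → ℝ) : Fin 3 → ℝ := ![c7, 0, 0]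

/-- `H₀₀₁(x,p) = ⟨p, F₀₀₁(x)⟩`. -/
def H001 (c1 c2 c3 c4 c5 c6 c7 : ℝ) (x p : Fin 3 → ℝ) : ℝ :=
  ∑ i, p i * lieBracket (F0 c1 c2 c3 c4 c5 c6) (lieBracket (F0 c1 c2 c3 c4 c5 c6) (F1 c7)) x i

/-- `H₁₀₁(x,p) = ⟨p, F₁₀₁(x)⟩`. -/
def H101 (c1 c2 c3 c4 c5 c6 c7 : ℝ) (x p : Fin 3 → ℝ) : ℝ :=
  ∑ i, p i * lieBracket (F1 c7) (lieBracket (F0 c1 c2 c3 c4 c5 c6) (F1 c7)) x i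

open ContinuousLinearMap in
/-- explicit derivative of F0 -/
def L0 (c1 c2 c3 c5 c6 : ℝ) (x : Fin 3 → ℝ) : (Fin 3 → ℝ) →L[ℝ] (Fin 3 → ℝ) :=
  ContinuousLinearMap.pi
    ![c1 • proj 0 + c2 • proj 2, c3 • proj 2,
      c5 • proj 0 + (c6 * (2 * x 2)) • proj 2]

lemma hasFDerivAt_F0 (c1 c2 c3 c4 c5 c6 : ℝ) (x : Fin 3 → ℝ) :
    HasFDerivAt (F0 c1 c2 c3 c4 c5 c6) (L0 c1 c2 c3 c5 c6 x) x := by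
  rw [hasFDerivAt_pi']
  intro i
  have hp0 := hasFDerivAt_apply (𝕜 := ℝ) (0 : Fin 3) x
  have hp2 := hasFDerivAt_apply (𝕜 := ℝ) (2 : Fin 3) x
  fin_cases i
  · simpa [F0, L0] using (hp0.const_mul c1).fun_add (hp2.const_mul c2)
  · simpa [F0, L0] using hp2.const_mul c3
  · have h2 := hp2.mul hp2
    have := ((hp0.const_mul c5).add (h2.const_mul c6)).const_add c4
    simp only [F0, L0]
    convert this using 1
    · funext y
      simp [Matrix.cons_val_two, sq]
      ring
    · simp only [L0, Matrix.cons_val_two, Matrix.tail_cons, Matrix.head_cons,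
        ContinuousLinearMap.proj_pi]
      ext v
      simp
      ring

lemma L0_apply (c1 c2 c3 c5 c6 : ℝ) (x v : Fin 3 → ℝ) :
    L0 c1 c2 c3 c5 c6 x v =
      ![c1 * v 0 + c2 * v 2, c3 * v 2, c5 * v 0 + c6 * (2 * x 2) * v 2] := by
  funext i
  fin_cases i <;> simp [L0, mul_assoc]

lemma fderiv_F1 (c7 : ℝ) (x : Fin 3 → ℝ) : fderiv ℝ (F1 c7) x = 0 := by
  have : F1 c7 = fun _ : Fin 3 → ℝ => ![c7, 0, 0] := rfl
  rw [this, fderiv_fun_const]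
  rfl

lemma lie01 (c1 c2 c3 c4 c5 c6 c7 : ℝ) (x : Fin 3 → ℝ) :
    lieBracket (F0 c1 c2 c3 c4 c5 c6) (F1 c7) x = ![-(c1 * c7), 0, -(c5 * c7)] := by
  unfold lieBracket
  rw [fderiv_F1, (hasFDerivAt_F0 c1 c2 c3 c4 c5 c6 x).fderiv]
  funext i
  simp [L0_apply, F1]
  fin_cases i <;> simp

lemma lie001 (c1 c2 c3 c4 c5 c6 c7 : ℝ) (x : Fin 3 → ℝ) :
    lieBracket (F0 c1 c2 c3 c4 c5 c6) (lieBracket (F0 c1 c2 c3 c4 c5 c6) (F1 c7)) x =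
      ![c1 * c1 * c7 + c2 * c5 * c7, c3 * c5 * c7,
        c5 * c1 * c7 + c6 * (2 * x 2) * (c5 * c7)] := by
  have hG : lieBracket (F0 c1 c2 c3 c4 c5 c6) (F1 c7)
      = fun _ : Fin 3 → ℝ => ![-(c1 * c7), 0, -(c5 * c7)] :=
    funext (lie01 c1 c2 c3 c4 c5 c6 c7)
  rw [hG]
  unfold lieBracket
  rw [fderiv_fun_const, (hasFDerivAt_F0 c1 c2 c3 c4 c5 c6 x).fderiv]
  funext i
  simp [L0_apply]
  fin_cases i <;> simp <;> ring

lemma lie101 (c1 c2 c3 c4 c5 c6 c7 : ℝ) (x : Fin 3 → ℝ) :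
    lieBracket (F1 c7) (lieBracket (F0 c1 c2 c3 c4 c5 c6) (F1 c7)) x = 0 := by
  have hG : lieBracket (F0 c1 c2 c3 c4 c5 c6) (F1 c7)
      = fun _ : Fin 3 → ℝ => ![-(c1 * c7), 0, -(c5 * c7)] :=
    funext (lie01 c1 c2 c3 c4 c5 c6 c7)
  rw [hG]
  unfold lieBracket
  rw [fderiv_fun_const, fderiv_F1]
  simp

lemma H001_eq (c1 c2 c3 c4 c5 c6 c7 : ℝ) (x p : Fin 3 → ℝ) :
    H001 c1 c2 c3 c4 c5 c6 c7 x p =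
      p 0 * (c1 * c1 * c7 + c2 * c5 * c7) + p 1 * (c3 * c5 * c7) +
        p 2 * (c5 * c1 * c7 + c6 * (2 * x 2) * (c5 * c7)) := by
  simp [H001, lie001, Fin.sum_univ_three]

lemma H101_eq (c1 c2 c3 c4 c5 c6 c7 : ℝ) (x p : Fin 3 → ℝ) :
    H101 c1 c2 c3 c4 c5 c6 c7 x p = 0 := by
  simp [H101, lie101, Fin.sum_univ_three]

/-- Fold points are exactly the points with `p₁ = p₃ = 0`, `p₂ ≠ 0`; at such a
point `H₀₀₁ = c₃c₅c₇p₂`, and every fold point is parabolic: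
`Φ̈₊ Φ̈₋ = H₀₀₁² > 0` since `H₁₀₁ ≡ 0`. -/
theorem stmt9 (c1 c2 c3 c4 c5 c6 c7 : ℝ)
    (h1 : c1 < 0) (h2 : c2 < 0) (h3 : 0 < c3) (h4 : c4 < 0)
    (h5 : 0 < c5) (h6 : c6 < 0) (h7 : 0 < c7) (x p : Fin 3 → ℝ) :
    ((c7 * p 0 = 0 ∧ -(c7 * (c1 * p 0 + c5 * p 2)) = 0 ∧ H001 c1 c2 c3 c4 c5 c6 c7 x p ≠ 0) ↔
      (p 0 = 0 ∧ p 2 = 0 ∧ p 1 ≠ 0)) ∧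
    H101 c1 c2 c3 c4 c5 c6 c7 x p = 0 ∧
    (p 0 = 0 → p 2 = 0 → p 1 ≠ 0 →
      H001 c1 c2 c3 c4 c5 c6 c7 x p = c3 * c5 * c7 * p 1 ∧
      (H001 c1 c2 c3 c4 c5 c6 c7 x p + H101 c1 c2 c3 c4 c5 c6 c7 x p) *
          (H001 c1 c2 c3 c4 c5 c6 c7 x p - H101 c1 c2 c3 c4 c5 c6 c7 x p)
        = H001 c1 c2 c3 c4 c5 c6 c7 x p ^ 2 ∧
      0 < H001 c1 c2 c3 c4 c5 c6 c7 x p ^ 2) := by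
  have hE := H001_eq c1 c2 c3 c4 c5 c6 c7 x p
  have hZ := H101_eq c1 c2 c3 c4 c5 c6 c7 x p
  refine ⟨?_, hZ, ?_⟩
  · constructor
    · rintro ⟨ha, hb, hc⟩
      have hp0 : p 0 = 0 := (mul_eq_zero.mp ha).resolve_left h7.ne'
      have hp2 : p 2 = 0 := by
        have h' : c7 * (c1 * p 0 + c5 * p 2) = 0 := by linarith
        have h'' : c1 * p 0 + c5 * p 2 = 0 := (mul_eq_zero.mp h').resolve_left h7.ne'
        rw [hp0] at h''
        have h3' : c5 * p 2 = 0 := by linarith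
        exact (mul_eq_zero.mp h3').resolve_left h5.ne'
      refine ⟨hp0, hp2, fun hp1 => hc ?_⟩
      rw [hE, hp0, hp2, hp1]; ring
    · rintro ⟨hp0, hp2, hp1⟩
      refine ⟨by rw [hp0]; ring, by rw [hp0, hp2]; ring, ?_⟩
      have hv : H001 c1 c2 c3 c4 c5 c6 c7 x p = c3 * c5 * c7 * p 1 := by
        rw [hE, hp0, hp2]; ring
      rw [hv]
      positivity
  · intro hp0 hp2 hp1
    have hv : H001 c1 c2 c3 c4 c5 c6 c7 x p = c3 * c5 * c7 * p 1 := by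
      rw [hE, hp0, hp2]; ring
    refine ⟨hv, by rw [hZ]; ring, ?_⟩
    rw [hv]
    positivity
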